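/- Let $a=\tfrac12\sigma^2$, $b=r-\sigma^2$, $c=2r+\beta-\sigma^2$ with $r\ge 0$, $0<\underline\sigma\le\sigma\le\bar\sigma$ and $\beta\ge\sigma^2$. Define the bilinear form $A(u,v)=\int_0^{x_{\max}}(a x^2 u' + b x u)v'\,dx + \int_0^{x_{\max}} c\,u v\,dx$ on $H^1_{0,\omega}(0,x_{\max})$. Then with $C=\tfrac12\min(\underline\sigma^2, 3r)$ (assume $r>0$), $A(v,v)\ge C\|v\|_{1,\omega}^2$ for all $v\in H^1_{0,\omega}$, where $\|v\|_{1,\omega}^2=\int v^2 + \int x^2 (v')^2$. -/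

import Mathlib

open intervalIntegral

/-- Coercivity of the Black–Scholes bilinear form
`A(u,v) = ∫ (a x² u' + b x u) v' + ∫ c u v` with `a = σ²/2`, `b = r - σ²`,
`c = 2r + β - σ²`, on `H¹_{0,ω}(0, xmax)`: with `C = (1/2) min(σ̲², 3r)` (and `r > 0`),
`A(v,v) ≥ C ‖v‖²_{1,ω}` where `‖v‖²_{1,ω} = ∫ v² + ∫ x² (v')²`. -/
theorem bilinear_form_coercive
    (xmax r σ σlo σhi β : ℝ)
    (hxmax : 0 < xmax) (hr : 0 < r)
    (hσlo : 0 < σlo) (hσ1 : σlo ≤ σ) (hσ2 : σ ≤ σhi) (hβ : σ ^ 2 ≤ β)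
    (v v' : ℝ → ℝ)
    (hderiv : ∀ x, HasDerivAt v (v' x) x)
    (hv0 : v 0 = 0) (hvmax : v xmax = 0)
    (hint1 : IntervalIntegrable (fun x => x * v x * v' x) MeasureTheory.volume 0 xmax)
    (hint2 : IntervalIntegrable (fun x => (v x) ^ 2) MeasureTheory.volume 0 xmax)
    (hint3 : IntervalIntegrable (fun x => x ^ 2 * (v' x) ^ 2) MeasureTheory.volume 0 xmax) :
    (∫ x in (0:ℝ)..xmax,
        ((σ ^ 2 / 2) * x ^ 2 * v' x + (r - σ ^ 2) * x * v x) * v' x)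
      + (∫ x in (0:ℝ)..xmax, (2 * r + β - σ ^ 2) * (v x) ^ 2)
      ≥ (min (σlo ^ 2) (3 * r) / 2) *
        ((∫ x in (0:ℝ)..xmax, (v x) ^ 2)
          + ∫ x in (0:ℝ)..xmax, x ^ 2 * (v' x) ^ 2) := by
  set I1 : ℝ := ∫ x in (0:ℝ)..xmax, x ^ 2 * (v' x) ^ 2 with hI1
  set I2 : ℝ := ∫ x in (0:ℝ)..xmax, (v x) ^ 2 with hI2
  set J : ℝ := ∫ x in (0:ℝ)..xmax, x * v x * v' x with hJ
  have hI1nonneg : 0 ≤ I1 := by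
    apply intervalIntegral.integral_nonneg hxmax.le
    intro x _; positivity
  have hI2nonneg : 0 ≤ I2 := by
    apply intervalIntegral.integral_nonneg hxmax.le
    intro x _; positivity
  -- key identity: ∫ (v²/2 + x v v') = 0
  have hderivg : ∀ x ∈ Set.uIcc (0:ℝ) xmax,
      HasDerivAt (fun x => x * (v x) ^ 2 / 2) ((v x) ^ 2 / 2 + x * v x * v' x) x := by
    intro x _
    have h := ((hasDerivAt_id x).mul ((hderiv x).pow 2)).div_const 2
    refine h.congr_deriv ?_
    simp only [id_eq, Pi.pow_apply]
    ring
  have hintsum : IntervalIntegrable (fun x => (v x) ^ 2 / 2 + x * v x * v' x)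
      MeasureTheory.volume 0 xmax := (hint2.div_const 2).add hint1
  have hkey : (∫ x in (0:ℝ)..xmax, ((v x) ^ 2 / 2 + x * v x * v' x)) = 0 := by
    rw [intervalIntegral.integral_eq_sub_of_hasDerivAt hderivg hintsum]
    simp [hv0, hvmax]
  have hsplit : (∫ x in (0:ℝ)..xmax, ((v x) ^ 2 / 2 + x * v x * v' x))
      = (1/2) * I2 + J := by
    rw [intervalIntegral.integral_add (hint2.div_const 2) hint1]
    have : (∫ x in (0:ℝ)..xmax, (v x) ^ 2 / 2) = (1/2) * I2 := by
      rw [intervalIntegral.integral_div]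
      ring
    rw [this]
  have hJval : J = -(1/2) * I2 := by
    have := hsplit.symm.trans hkey
    linarith
  -- rewrite first integral
  have h1 : (∫ x in (0:ℝ)..xmax,
      ((σ ^ 2 / 2) * x ^ 2 * v' x + (r - σ ^ 2) * x * v x) * v' x)
      = (σ ^ 2 / 2) * I1 + (r - σ ^ 2) * J := by
    have heq : ∀ x : ℝ, ((σ ^ 2 / 2) * x ^ 2 * v' x + (r - σ ^ 2) * x * v x) * v' x
        = (σ ^ 2 / 2) * (x ^ 2 * (v' x) ^ 2) + (r - σ ^ 2) * (x * v x * v' x) := by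
      intro x; ring
    rw [intervalIntegral.integral_congr (fun x _ => heq x),
      intervalIntegral.integral_add (hint3.const_mul _) (hint1.const_mul _),
      intervalIntegral.integral_const_mul, intervalIntegral.integral_const_mul]
  have h2 : (∫ x in (0:ℝ)..xmax, (2 * r + β - σ ^ 2) * (v x) ^ 2)
      = (2 * r + β - σ ^ 2) * I2 := intervalIntegral.integral_const_mul _ _
  rw [h1, h2, hJval]
  have hσσ : σlo ^ 2 ≤ σ ^ 2 := by nlinarith
  have hm1 : min (σlo ^ 2) (3 * r) ≤ σ ^ 2 := le_trans (min_le_left _ _) hσσ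
  have hm2 : min (σlo ^ 2) (3 * r) ≤ 3 * r := min_le_right _ _
  nlinarith [mul_le_mul_of_nonneg_right hm1 hI1nonneg,
    mul_le_mul_of_nonneg_right hm2 hI2nonneg]
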